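/- With the notation above, the following identities hold in A: Hh = δ·H; Hσ₁h = H; Hτ = (v²−1)·H; and H·C·τ = (v²−1−z²)·H. -/

import Mathlib

/- R = ℤ[v^{±1}, z^{±1}] modelled as the group algebra of ℤ × ℤ over ℤ:
   the coefficient of v^i z^j in P is `P (i, j)`. -/
noncomputable section

abbrev R2 : Type := AddMonoidAlgebra ℤ (ℤ × ℤ)

/-- `v` -/
def V : R2 := AddMonoidAlgebra.single (1, 0) 1
/-- `v⁻¹` -/
def Vi : R2 := AddMonoidAlgebra.single (-1, 0) 1
/-- `z` -/
def Z : R2 := AddMonoidAlgebra.single (0, 1) 1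
/-- `z⁻¹` -/
def Zi : R2 := AddMonoidAlgebra.single (0, -1) 1
/-- `δ = (v⁻¹ - v) z⁻¹` -/
def δR : R2 := (Vi - V) * Zi

variable {A : Type*} [Ring A] [Algebra R2 A]

/-- `c = v⁻¹ σ` -/
def cOf (σ : Aˣ) : A := Vi • (σ : A)
/-- `c⁻¹ = v σ⁻¹` -/
def cInvOf (σ : Aˣ) : A := V • ((σ⁻¹ : Aˣ) : A)
/-- `C = c₁ c₃` -/
def COf (σ₁ σ₃ : Aˣ) : A := cOf σ₁ * cOf σ₃
/-- `τ = (-zv) h` -/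
def τOf (h : A) : A := (-(Z * V)) • h

theorem statement1 (A : Type*) [Ring A] [Algebra R2 A]
    (σ₁ σ₃ : Aˣ) (h H : A)
    (hcomm : (σ₁ : A) * σ₃ = (σ₃ : A) * σ₁)
    (hskein1 : Vi • (σ₁ : A) - V • ((σ₁⁻¹ : Aˣ) : A) = Z • (1 : A))
    (hskein3 : Vi • (σ₃ : A) - V • ((σ₃⁻¹ : Aˣ) : A) = Z • (1 : A))
    (hH1 : (σ₁ : A) * H = (σ₃ : A) * H)
    (hH2 : H * (σ₁ : A) = H * (σ₃ : A))
    (hHdef : H = h * (σ₁ : A) * ((σ₃⁻¹ : Aˣ) : A) * h)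
    (hh2 : h * h = δR • h)
    (hh : h * (σ₁ : A) * h = h)
    :
    H * h = δR • H ∧
    H * (σ₁ : A) * h = H ∧
    H * τOf h = (V ^ 2 - 1) • H ∧
    H * COf σ₁ σ₃ * τOf h = (V ^ 2 - 1 - Z ^ 2) • H := by

  have hmi : (σ₃ : A) * ((σ₃⁻¹ : Aˣ) : A) = 1 := Units.mul_inv σ₃
  have hVVi : V * Vi = 1 := by
    simp [V, Vi, AddMonoidAlgebra.single_mul_single, AddMonoidAlgebra.one_def, Prod.mk_zero_zero]
  have hZZi : Z * Zi = 1 := by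
    simp [Z, Zi, AddMonoidAlgebra.single_mul_single, AddMonoidAlgebra.one_def, Prod.mk_zero_zero]
  have s1 : H * h = δR • H := by
    rw [hHdef, mul_assoc _ h h, hh2, mul_smul_comm]
  have s2 : H * (σ₁ : A) * h = H := by
    conv_lhs => rw [hHdef]
    rw [mul_assoc (h * (σ₁:A) * ((σ₃⁻¹ : Aˣ):A)) h (σ₁:A),
        mul_assoc (h * (σ₁:A) * ((σ₃⁻¹ : Aˣ):A)) (h * (σ₁:A)) h,
        mul_assoc h (σ₁:A) h, ← mul_assoc h (σ₁:A) h, hh]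
    exact hHdef.symm
  have hA : H * (σ₁ : A) * ((σ₃⁻¹ : Aˣ) : A) = H := by
    rw [hH2, mul_assoc, hmi, mul_one]
  have s1' : H * (σ₁ : A) * ((σ₃⁻¹ : Aˣ) : A) * h = δR • H := by rw [hA, s1]
  have key3 : -(Z * V) * δR = V ^ 2 - 1 := by
    have e : -(Z * V) * δR = (Z * Zi) * (V * V - V * Vi) := by unfold δR; ring
    rw [e, hZZi, hVVi]; ring
  have s3 : H * τOf h = (V ^ 2 - 1) • H := by
    rw [τOf, mul_smul_comm, s1, smul_smul, key3]
  have hσ₃ : (σ₃ : A) = (V * Z) • (1 : A) + (V * V) • ((σ₃⁻¹ : Aˣ) : A) := by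
    have skein3' : Vi • (σ₃ : A) = Z • (1 : A) + V • ((σ₃⁻¹ : Aˣ) : A) :=
      sub_eq_iff_eq_add.mp hskein3
    calc (σ₃ : A) = V • (Vi • (σ₃ : A)) := by rw [smul_smul, hVVi, one_smul]
      _ = V • (Z • (1 : A) + V • ((σ₃⁻¹ : Aˣ) : A)) := by rw [skein3']
      _ = (V * Z) • (1 : A) + (V * V) • ((σ₃⁻¹ : Aˣ) : A) := by
          rw [smul_add, smul_smul, smul_smul]
  have s2' : H * ((σ₁ : A) * h) = H := by rw [← mul_assoc]; exact s2
  have s1'' : H * ((σ₁ : A) * (((σ₃⁻¹ : Aˣ) : A) * h)) = δR • H := by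
    rw [← mul_assoc, ← mul_assoc]; exact s1'
  refine ⟨s1, s2, s3, ?_⟩
  rw [COf, cOf, cOf, τOf, hσ₃]
  simp only [mul_add, add_mul, smul_add, smul_mul_assoc, mul_smul_comm, smul_smul,
    mul_one, one_mul, mul_assoc, s2', s1'']
  rw [← add_smul]
  congr 1
  unfold δR
  linear_combination (V^2*(V*Vi+1) - Z^2*(V*Vi+1) - ((V*Vi)^2 + V*Vi + 1)) * hVVi
    + (V^2*(V*Vi)^2 - (V*Vi)^3) * hZZi
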